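/- Let X be a finite set of N points in R^d, let F < N, and suppose p ∈ R^d is such that every closed half-space containing p contains more than F points of X (e.g., at least N/(d+1) points with F < N/(d+1)). Then for every subset A ⊆ X with |A| ≤ F, the point p lies in the convex hull of X \ A. -/

import Mathlib

open RealInnerProductSpace

open Classical in
/-- If every closed half-space containing `p` contains more than `F`
points of the `N`-point set `X`, then for every `A ⊆ X` with `|A| ≤ F`,
`p ∈ conv (X \ A)`. -/
theorem stmt_5 (d : ℕ) (X : Finset (EuclideanSpace ℝ (Fin d))) (N F : ℕ)
    (hN : N = X.card) (hF : F < N) (p : EuclideanSpace ℝ (Fin d))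
    (hp : ∀ a : EuclideanSpace ℝ (Fin d), a ≠ 0 → ∀ b : ℝ, b ≤ ⟪a, p⟫ →
      F < (X.filter fun x => b ≤ ⟪a, x⟫).card) :
    ∀ A : Finset (EuclideanSpace ℝ (Fin d)), A ⊆ X → A.card ≤ F →
      p ∈ convexHull ℝ ((X \ A : Finset (EuclideanSpace ℝ (Fin d))) : Set (EuclideanSpace ℝ (Fin d))) := by
  intro A hAX hAF
  by_contra hpc
  -- X \ A is nonempty
  have hcard : 0 < (X \ A).card := by
    rw [Finset.card_sdiff_of_subset hAX]
    omega
  -- separate p from the closed convex hull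
  have hclosed : IsClosed (convexHull ℝ ((X \ A : Finset _) : Set (EuclideanSpace ℝ (Fin d)))) :=
    (Set.Finite.isClosed_convexHull ℝ (X \ A).finite_toSet)
  obtain ⟨f, u, hfu, hup⟩ := geometric_hahn_banach_closed_point
    (convex_convexHull ℝ _) hclosed hpc
  set a := (InnerProductSpace.toDual ℝ (EuclideanSpace ℝ (Fin d))).symm f with ha
  have hax : ∀ x, ⟪a, x⟫ = f x := fun x =>
    InnerProductSpace.toDual_symm_apply
  obtain ⟨x0, hx0⟩ := Finset.card_pos.mp hcard
  have hx0' : f x0 < u := hfu x0 (subset_convexHull ℝ _ hx0)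
  have hane : a ≠ 0 := by
    intro h
    have h1 : f x0 = 0 := by rw [← hax, h, inner_zero_left]
    have h2 : f p = 0 := by rw [← hax, h, inner_zero_left]
    linarith
  have hb : u ≤ ⟪a, p⟫ := by rw [hax]; linarith
  have hkey := hp a hane u hb
  -- all points of X with u ≤ ⟪a, x⟫ lie in A
  have hsub : (X.filter fun x => u ≤ ⟪a, x⟫) ⊆ A := by
    intro x hx
    rw [Finset.mem_filter] at hx
    by_contra hxA
    have hxS : x ∈ X \ A := Finset.mem_sdiff.mpr ⟨hx.1, hxA⟩
    have := hfu x (subset_convexHull ℝ _ hxS)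
    rw [hax] at hx
    linarith [hx.2]
  have := Finset.card_le_card hsub
  omega
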